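/- In a non-stunted conforming history, a process halts if and only if it is removed from the group. -/
import Mathlib


/-- In a non-stunted conforming history, a process halts if and only if it is removed
from the group.  Here each process `P` has a view interval `[j P, r P)` inside the view
interval `[0, numview)`; `P` is removed iff `r P < numview`; the history is stunted if it
has finitely many processes all of which halt.  The hypotheses are the conforming axioms
used: removed processes halt, halting processes have a finite view interval, a finite
channel has a removed source or a halting target, and a halting process queues only
finitely many packets. -/
theorem halts_iff_removed
    {Proc Packet : Type*}
    (numview : ℕ∞) (j r : Proc → ℕ∞)
    (halts : Proc → Prop)
    (src tgt : Packet → Proc)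
    (recvExists : Packet → Prop)
    (hr : ∀ P : Proc, r P ≤ numview)
    -- if there are finitely many views then there are finitely many processes
    (hfinProc : numview < ⊤ → Finite Proc)
    -- Conforming Halt Axiom
    (confHalt : ∀ P : Proc, r P < numview → halts P)
    -- Conforming GMS Axiom: a halting process has a finite view interval
    (confGMS : ∀ P : Proc, halts P → r P < ⊤)
    -- First Halting Axiom: a halting process has a finite event set,
    -- hence queues only finitely many packets
    (firstHalting : ∀ P : Proc, halts P → {k : Packet | src k = P}.Finite)
    -- Conforming Channel Axiom
    (confChannel : ∀ P Q : Proc,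
        {k : Packet | src k = P ∧ tgt k = Q ∧ recvExists k}.Finite →
        r P < numview ∨ halts Q)
    -- the history is not stunted
    (hnonstunted : ¬ ((Set.univ : Set Proc).Finite ∧ ∀ P : Proc, halts P)) :
    ∀ P : Proc, halts P ↔ r P < numview := by
  intro P
  constructor
  · intro hP
    by_contra hlt
    have hreq : r P = numview := le_antisymm (hr P) (not_lt.mp hlt)
    have hntop : numview < ⊤ := hreq ▸ confGMS P hP
    have hfin : Finite Proc := hfinProc hntop
    apply hnonstunted
    refine ⟨Set.finite_univ, fun Q => ?_⟩
    have hch := confChannel P Q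
      ((firstHalting P hP).subset (fun k hk => hk.1))
    rcases hch with h | h
    · exact absurd (hreq ▸ h) (lt_irrefl _)
    · exact h
  · exact confHalt P
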